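/- With X_u^v the Okada character matrix, X_u^v = 0 if and only if some position d_s of a 2 in v equals δ_j + 1 for some position δ_j of a 2 in u (equivalently, v does not split as a concatenation according to the block ranks of u). -/
import Mathlib


/-- A Fibonacci word: a finite word in the alphabet `{1,2}`. -/
def IsFibWord (v : List ℕ) : Prop := ∀ x ∈ v, x = 1 ∨ x = 2

/-- `mOnes u` is `m(u)`, the number of `1`'s at the left end of `u`. -/
def mOnes : List ℕ → ℕ
  | 1 :: t => mOnes t + 1
  | _ => 0

/-- The list of positions of the `2`'s in a Fibonacci word (leftmost `2` first):
if `w = u ++ 2 :: v` then the position of the indicated `2` is `|v| + 1`, where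
`|v|` is the sum of the digits of `v`. -/
def pos2 : List ℕ → List ℕ
  | [] => []
  | 2 :: t => (t.sum + 1) :: pos2 t
  | _ :: t => pos2 t

/-- The Okada character matrix `X_u^v`, defined by Okada's recursions:
`X_{1u}^{1v} = X_u^v`, `X_{2u}^{1v} = X_{1u}^v`, `X_{2u}^{2v} = −X_u^v`,
`X_{11u}^{2v} = (m(u)+1)·X_u^v`, `X_{12u}^{2v} = 0`, `X_∅^∅ = 1`. -/
def okadaX : List ℕ → List ℕ → ℤ
  | [], [] => 1
  | 1 :: u, 1 :: v => okadaX u v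
  | 2 :: u, 1 :: v => okadaX (1 :: u) v
  | 2 :: u, 2 :: v => - okadaX u v
  | 1 :: 1 :: u, 2 :: v => (mOnes u + 1) * okadaX u v
  | 1 :: 2 :: _, 2 :: _ => 0
  | _, _ => 0
  termination_by u v => u.length + v.length
  decreasing_by
    all_goals simp only [List.length_cons]
    all_goals omega

lemma pos2_cons_two (t : List ℕ) : pos2 (2 :: t) = (t.sum + 1) :: pos2 t := rfl

lemma pos2_cons_ne (t : List ℕ) (x : ℕ) (hx : x ≠ 2) : pos2 (x :: t) = pos2 t := by
  cases x with
  | zero => rfl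
  | succ n => cases n with
    | zero => rfl
    | succ m => cases m with
      | zero => exact absurd rfl hx
      | succ k => rfl

lemma pos2_lt_sum (w : List ℕ) : ∀ d ∈ pos2 w, d + 1 ≤ w.sum := by
  induction w with
  | nil => intro d hd; simp [pos2] at hd
  | cons x t ih =>
    intro d hd
    by_cases hx : x = 2
    · subst hx
      rw [pos2_cons_two] at hd
      rcases List.mem_cons.mp hd with hd | hd
      · subst hd; simp; omega
      · have := ih d hd; simp; omega
    · rw [pos2_cons_ne t x hx] at hd
      have := ih d hd
      simp only [List.sum_cons]; omega

lemma okada_main : ∀ n u v, u.length + v.length ≤ n → IsFibWord u → IsFibWord v →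
    u.sum = v.sum →
    (okadaX u v = 0 ↔ ∃ d ∈ pos2 v, ∃ δ ∈ pos2 u, d = δ + 1) := by
  intro n
  induction n with
  | zero =>
    intro u v hlen hu hv hr
    have hu0 : u = [] := by cases u <;> simp_all
    have hv0 : v = [] := by cases v <;> simp_all
    subst hu0; subst hv0
    simp [okadaX, pos2]
  | succ n ih =>
    intro u v hlen hu hv hr
    rcases u with _ | ⟨x, u'⟩
    · -- u = []
      rcases v with _ | ⟨y, v'⟩
      · simp [okadaX, pos2]
      · exfalso
        rcases hv y (by simp) with hy | hy <;> subst hy <;> simp [List.sum_cons] at hr <;> omega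
    rcases v with _ | ⟨y, v'⟩
    · exfalso
      rcases hu x (by simp) with hx | hx <;> subst hx <;> simp [List.sum_cons] at hr
    have hu' : IsFibWord u' := fun z hz => hu z (by simp [hz])
    have hv' : IsFibWord v' := fun z hz => hv z (by simp [hz])
    rcases hu x (by simp) with hx | hx <;> rcases hv y (by simp) with hy | hy <;>
      subst hx <;> subst hy
    · -- 1,1
      have h1 : okadaX (1 :: u') (1 :: v') = okadaX u' v' := by rw [okadaX]
      have hr' : u'.sum = v'.sum := by simp [List.sum_cons] at hr; omega
      rw [h1, pos2_cons_ne u' 1 (by norm_num), pos2_cons_ne v' 1 (by norm_num)]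
      exact ih u' v' (by simp at hlen ⊢; omega) hu' hv' hr'
    · -- 1,2 : split u'
      have hr' : u'.sum + 1 = v'.sum + 2 := by simp [List.sum_cons] at hr; omega
      rcases u' with _ | ⟨z, u''⟩
      · exfalso; simp at hr'
      have hu'' : IsFibWord u'' := fun w hw => hu' w (by simp [hw])
      rcases hu' z (by simp) with hz | hz <;> subst hz
      · -- 1,1,_ vs 2
        have h1 : okadaX (1 :: 1 :: u'') (2 :: v') = (mOnes u'' + 1) * okadaX u'' v' := by
          rw [okadaX]
        have hr'' : u''.sum = v'.sum := by simp [List.sum_cons] at hr'; omega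
        rw [h1, pos2_cons_ne (1 :: u'') 1 (by norm_num),
          pos2_cons_ne u'' 1 (by norm_num), pos2_cons_two]
        have hmain := ih u'' v' (by simp at hlen ⊢; omega) hu'' hv' hr''
        constructor
        · intro h
          rcases mul_eq_zero.mp h with h0 | h0
          · exfalso; have : (0:ℤ) < (mOnes u'' : ℤ) + 1 := by positivity
            omega
          · rcases hmain.mp h0 with ⟨d, hd, δ, hδ, hdδ⟩
            exact ⟨d, by simp [hd], δ, hδ, hdδ⟩
        · rintro ⟨d, hd, δ, hδ, hdδ⟩
          rcases List.mem_cons.mp hd with hd | hd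
          · exfalso
            have hb := pos2_lt_sum _ δ hδ
            subst hd; omega
          · have := hmain.mpr ⟨d, hd, δ, hδ, hdδ⟩
            rw [this]; ring
      · -- 1,2,_ vs 2 : zero case
        have h1 : okadaX (1 :: 2 :: u'') (2 :: v') = 0 := by rw [okadaX]
        have hr'' : u''.sum + 1 = v'.sum := by simp [List.sum_cons] at hr'; omega
        rw [h1, pos2_cons_ne (2 :: u'') 1 (by norm_num), pos2_cons_two, pos2_cons_two]
        constructor
        · intro _
          exact ⟨v'.sum + 1, by simp, u''.sum + 1, by simp, by omega⟩
        · intro _; rfl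
    · -- 2,1
      have h1 : okadaX (2 :: u') (1 :: v') = okadaX (1 :: u') v' := by rw [okadaX]
      have hr' : (1 :: u').sum = v'.sum := by simp [List.sum_cons] at hr ⊢; omega
      have hu1 : IsFibWord (1 :: u') := by
        intro z hz; rcases List.mem_cons.mp hz with hz | hz
        · left; exact hz
        · exact hu' z hz
      have hmain := ih (1 :: u') v' (by simp at hlen ⊢; omega) hu1 hv' hr'
      rw [h1, pos2_cons_ne v' 1 (by norm_num), pos2_cons_two,
        pos2_cons_ne u' 1 (by norm_num)] at *
      rw [hmain]
      constructor
      · rintro ⟨d, hd, δ, hδ, hdδ⟩; exact ⟨d, hd, δ, by simp [hδ], hdδ⟩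
      · rintro ⟨d, hd, δ, hδ, hdδ⟩
        rcases List.mem_cons.mp hδ with hδ | hδ
        · exfalso
          have hb := pos2_lt_sum _ d hd
          have : v'.sum = u'.sum + 1 := by simp [List.sum_cons] at hr'; omega
          omega
        · exact ⟨d, hd, δ, hδ, hdδ⟩
    · -- 2,2
      have h1 : okadaX (2 :: u') (2 :: v') = - okadaX u' v' := by rw [okadaX]
      have hr' : u'.sum = v'.sum := by simp [List.sum_cons] at hr; omega
      have hmain := ih u' v' (by simp at hlen ⊢; omega) hu' hv' hr'
      rw [h1, neg_eq_zero, pos2_cons_two, pos2_cons_two, hmain]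
      constructor
      · rintro ⟨d, hd, δ, hδ, hdδ⟩; exact ⟨d, by simp [hd], δ, by simp [hδ], hdδ⟩
      · rintro ⟨d, hd, δ, hδ, hdδ⟩
        rcases List.mem_cons.mp hd with hd | hd <;> rcases List.mem_cons.mp hδ with hδ | hδ
        · exfalso; omega
        · exfalso; have hb := pos2_lt_sum _ δ hδ; omega
        · exfalso; have hb := pos2_lt_sum _ d hd; omega
        · exact ⟨d, hd, δ, hδ, hdδ⟩

/-- `X_u^v = 0` if and only if some position `d` of a `2` in `v` equals `δ + 1`
for some position `δ` of a `2` in `u`. -/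
theorem stmt_17 (u v : List ℕ) (hu : IsFibWord u) (hv : IsFibWord v)
    (hrank : u.sum = v.sum) :
    okadaX u v = 0 ↔ ∃ d ∈ pos2 v, ∃ δ ∈ pos2 u, d = δ + 1 := by
  exact okada_main (u.length + v.length) u v le_rfl hu hv hrank
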